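/- For every r ∈ ℕ, u ∈ (0,1], and k ∈ ℤ, the k-th Fourier coefficient of the periodization h̃^r_u of h^r_u satisfies |ĥ̃^r_u(k)| ≤ min(u^r, 1/|k|^r), where for k = 0 the right-hand side is u^r. -/

import Mathlib

open MeasureTheory Real

noncomputable section

/-- The univariate smooth hat function `h^r_u`. -/
def hFun (u : ℝ) : ℕ → ℝ → ℝ
  | 0 => fun _ => 0
  | 1 => fun x => Set.indicator (Set.Ico (-(u / 2)) (u / 2)) (fun _ => (1 : ℝ)) x
  | (r + 2) => fun x => ∫ y : ℝ, hFun u (r + 1) (x - y) * hFun u 1 y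

/-- The multivariate function `h^r_B` for the box with center `z` and parameter vector `u`. -/
def hBox (d r : ℕ) (z u : Fin d → ℝ) (x : Fin d → ℝ) : ℝ :=
  ∏ j, hFun (u j) r (x j - z j)

/-- The box `B = ∏_j [z_j - r u_j/2, z_j + r u_j/2)`. -/
def boxSet (d r : ℕ) (z u : Fin d → ℝ) : Set (Fin d → ℝ) :=
  Set.univ.pi fun j => Set.Ico (z j - r * u j / 2) (z j + r * u j / 2)

/-- The unit cube `[0,1)^d`. -/
def unitCube (d : ℕ) : Set (Fin d → ℝ) :=
  Set.univ.pi fun _ => Set.Ico (0 : ℝ) 1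

/-- Periodization of a multivariate function over `ℤ^d`. -/
def periodize (d : ℕ) (f : (Fin d → ℝ) → ℝ) (x : Fin d → ℝ) : ℝ :=
  ∑' m : Fin d → ℤ, f fun j => (m j : ℝ) + x j

/-- The error of the equal-weight cubature with nodes `ξ 1, …, ξ m` applied to the
periodization of `h^r_B` shifted by `z`. -/
def errFun (d r m : ℕ) (ξ : ℕ → Fin d → ℝ) (zB u : Fin d → ℝ) (z : Fin d → ℝ) : ℝ :=
  (∫ x in unitCube d, periodize d (hBox d r zB u) fun j => x j - z j) -
    (m : ℝ)⁻¹ * ∑ μ ∈ Finset.Icc 1 m, periodize d (hBox d r zB u) fun j => ξ μ j - z j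

/-- The hyperbolic cross `Γ(N,d)`. -/
def hyperbolicCross (d : ℕ) (N : ℝ) : Set (Fin d → ℤ) :=
  {k | (∏ j, max |(k j : ℝ)| 1) ≤ N}

/-- The exponential `e^{2πi(k,x)}`. -/
def expFun (d : ℕ) (k : Fin d → ℤ) (x : Fin d → ℝ) : ℂ :=
  Complex.exp (2 * Real.pi * Complex.I * ∑ j, (k j : ℂ) * (x j : ℂ))

/-- The space `T(N,d)` of trigonometric polynomials with frequencies in `Γ(N,d)`. -/
def TSpace (d : ℕ) (N : ℝ) : Submodule ℂ ((Fin d → ℝ) → ℂ) :=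
  Submodule.span ℂ (expFun d '' hyperbolicCross d N)

/-- The nodes `y^μ` of the Korobov cubature formula `P_m(·,a)`. -/
def korobovNode (d m : ℕ) (a : Fin d → ℤ) (μ : ℕ) : Fin d → ℝ :=
  fun j => Int.fract ((μ : ℝ) * (a j : ℝ) / (m : ℝ))

/-- The Korobov cubature formula `P_m(f,a)`. -/
def korobovSum (d m : ℕ) (a : Fin d → ℤ) (f : (Fin d → ℝ) → ℂ) : ℂ :=
  (m : ℂ)⁻¹ * ∑ μ ∈ Finset.Icc 1 m, f (korobovNode d m a μ)

/-- Exactness of the Korobov cubature formula on `T(N,d)`. -/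
def IsExact (d m : ℕ) (a : Fin d → ℤ) (N : ℝ) : Prop :=
  ∀ f ∈ TSpace d N, korobovSum d m a f = ∫ x in unitCube d, f x

/-- The Fibonacci numbers with `b 0 = b 1 = 1`. -/
def fibb : ℕ → ℕ
  | 0 => 1
  | 1 => 1
  | (n + 2) => fibb (n + 1) + fibb n

/-- The points of the Fibonacci point set `𝓕_n`. -/
def fibNode (n : ℕ) (μ : ℕ) : Fin 2 → ℝ :=
  ![(μ : ℝ) / (fibb n : ℝ), Int.fract ((μ : ℝ) * (fibb (n - 1) : ℝ) / (fibb n : ℝ))]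


open Set
open scoped Convolution

variable {u : ℝ}

/-- The character `e^{-2πikx}`. -/
def ee (k : ℤ) (x : ℝ) : ℂ := Complex.exp (-(2 * Real.pi * Complex.I * (k : ℂ) * (x : ℂ)))

lemma ee_norm (k : ℤ) (x : ℝ) : ‖ee k x‖ = 1 := by
  rw [ee, Complex.norm_exp]
  norm_num [Complex.mul_re, Complex.mul_im]

lemma ee_abs (k : ℤ) (x : ℝ) : ‖ee k x‖ = 1 := ee_norm k x

lemma ee_add (k : ℤ) (x y : ℝ) : ee k (x + y) = ee k x * ee k y := by
  rw [ee, ee, ee, ← Complex.exp_add]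
  push_cast
  ring_nf

lemma ee_int (k : ℤ) (m : ℤ) : ee k (m : ℝ) = 1 := by
  rw [ee]
  have : -(2 * (Real.pi : ℂ) * Complex.I * (k : ℂ) * ((m : ℝ) : ℂ)) =
      ((-(k * m) : ℤ) : ℂ) * (2 * (Real.pi : ℂ) * Complex.I) := by push_cast; ring
  rw [this, Complex.exp_int_mul_two_pi_mul_I]

lemma ee_continuous (k : ℤ) : Continuous (ee k) := by
  unfold ee; fun_prop

lemma integrable_mul_ee {f : ℝ → ℝ} (hf : Integrable f) (k : ℤ) :
    Integrable (fun x => (f x : ℂ) * ee k x) := by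
  have h := (hf.ofReal (𝕜 := ℂ)).bdd_mul (ee_continuous k).aestronglyMeasurable
    (Filter.Eventually.of_forall fun x => le_of_eq (ee_norm k x))
  simpa [mul_comm] using h

variable {u : ℝ}

lemma hFun_one (x : ℝ) : hFun u 1 x = Set.indicator (Set.Ico (-(u / 2)) (u / 2)) (fun _ => (1 : ℝ)) x := by
  simp [hFun]

lemma hFun_one' : hFun u 1 = Set.indicator (Set.Ico (-(u / 2)) (u / 2)) (fun _ => (1 : ℝ)) :=
  funext hFun_one

lemma hFun_succ {r : ℕ} (hr : 1 ≤ r) (x : ℝ) :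
    hFun u (r + 1) x = ∫ y : ℝ, hFun u r (x - y) * hFun u 1 y := by
  obtain ⟨s, rfl⟩ := Nat.exists_eq_add_of_le hr
  rw [add_comm 1 s]
  show hFun u (s + 2) x = _
  simp only [hFun]

lemma hFun_one_nonneg (x : ℝ) : 0 ≤ hFun u 1 x := by
  rw [hFun_one]; exact Set.indicator_nonneg (fun _ _ => zero_le_one) x

lemma hFun_one_le_one (x : ℝ) : hFun u 1 x ≤ 1 := by
  rw [hFun_one]; exact Set.indicator_le' (fun _ _ => le_refl 1) (fun _ _ => zero_le_one) x

lemma hFun_one_meas : Measurable (hFun u 1) := by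
  rw [hFun_one']; exact measurable_const.indicator measurableSet_Ico

lemma hFun_one_integrable : Integrable (hFun u 1) := by
  rw [hFun_one']
  exact (integrable_indicator_iff measurableSet_Ico).2 <|
    (integrableOn_const measure_Ico_lt_top.ne)

lemma hFun_one_integral (hu : 0 < u) : ∫ x : ℝ, hFun u 1 x = u := by
  simp only [hFun_one]
  rw [MeasureTheory.integral_indicator_const (1:ℝ) measurableSet_Ico]
  rw [Real.volume_real_Ico]
  rw [max_eq_left (by linarith)]
  simp

lemma hFun_one_supp (hu : 0 < u) (x : ℝ) (hx : 1 * u / 2 < |x|) : hFun u 1 x = 0 := by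
  rw [hFun_one, Set.indicator_apply_eq_zero]
  intro hmem
  rw [Set.mem_Ico] at hmem
  rw [one_mul] at hx
  rcases abs_cases x with ⟨h1, h2⟩ | ⟨h1, h2⟩ <;> exfalso <;> [linarith; linarith]

/-- Main structural lemma. -/
lemma hFun_prop (hu0 : 0 < u) (hu1 : u ≤ 1) :
    ∀ r : ℕ, 1 ≤ r → Measurable (hFun u r) ∧ (∀ x, 0 ≤ hFun u r x) ∧
      (∀ x, hFun u r x ≤ 1) ∧ (∀ x, r * u / 2 < |x| → hFun u r x = 0) := by
  intro r hr
  induction r, hr using Nat.le_induction with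
  | base =>
    refine ⟨hFun_one_meas, hFun_one_nonneg, hFun_one_le_one, fun x hx => ?_⟩
    exact hFun_one_supp hu0 x (by push_cast at hx; linarith)
  | succ r hr ih =>
    obtain ⟨meas, nonneg, le_one, supp⟩ := ih
    have hint : Integrable (hFun u r) := by
      have hind : Integrable (Set.indicator (Icc (-((r:ℝ)*u/2)) ((r:ℝ)*u/2)) (fun _ => (1:ℝ))) :=
        (integrable_indicator_iff measurableSet_Icc).2
          ((integrableOn_const measure_Icc_lt_top.ne))
      refine hind.mono' meas.aestronglyMeasurable ?_
      filter_upwards with x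
      rw [Real.norm_eq_abs, abs_of_nonneg (nonneg x)]
      by_cases hx : x ∈ Icc (-((r:ℝ)*u/2)) ((r:ℝ)*u/2)
      · rw [Set.indicator_of_mem hx]; exact le_one x
      · rw [Set.indicator_of_notMem hx]
        have : (r:ℝ) * u / 2 < |x| := by
          rw [Set.mem_Icc, not_and_or, not_le, not_le] at hx
          rcases hx with h | h
          · calc (r:ℝ)*u/2 < -x := by linarith
            _ ≤ |x| := neg_le_abs x
          · exact h.trans_le (le_abs_self x)
        rw [supp x this]
    have measS : Measurable (hFun u (r+1)) := by
      have : StronglyMeasurable (fun x : ℝ => ∫ y : ℝ, hFun u r (x - y) * hFun u 1 y) := by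
        apply MeasureTheory.StronglyMeasurable.integral_prod_right'
          (f := fun p : ℝ × ℝ => hFun u r (p.1 - p.2) * hFun u 1 p.2)
        exact ((meas.comp measurable_sub).mul (hFun_one_meas.comp measurable_snd)).stronglyMeasurable
      have := this.measurable
      convert this using 1
      funext x; exact hFun_succ hr x
    refine ⟨measS, ?_, ?_, ?_⟩
    · intro x
      rw [hFun_succ hr]
      exact integral_nonneg fun y => mul_nonneg (nonneg _) (hFun_one_nonneg y)
    · intro x
      rw [hFun_succ hr]
      have h1 : (∫ y : ℝ, hFun u r (x - y) * hFun u 1 y) ≤ ∫ y : ℝ, hFun u 1 y := by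
        apply integral_mono _ hFun_one_integrable
        · intro y
          calc hFun u r (x - y) * hFun u 1 y ≤ 1 * hFun u 1 y :=
            mul_le_mul_of_nonneg_right (le_one _) (hFun_one_nonneg y)
          _ = hFun u 1 y := one_mul _
        · exact hFun_one_integrable.bdd_mul ((meas.comp (measurable_const.sub measurable_id)).aestronglyMeasurable)
            (Filter.Eventually.of_forall fun y => by rw [Real.norm_eq_abs, abs_of_nonneg (nonneg _)]; exact le_one _)
      calc _ ≤ ∫ y : ℝ, hFun u 1 y := h1
      _ = u := hFun_one_integral hu0
      _ ≤ 1 := hu1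
    · intro x hx
      rw [hFun_succ hr]
      rw [show (0:ℝ) = ∫ y : ℝ, (0:ℝ) from (integral_zero ℝ ℝ).symm]
      congr 1
      funext y
      by_cases hy : hFun u 1 y = 0
      · rw [hy, mul_zero]
      · have hy' : |y| ≤ u / 2 := by
          by_contra hy2
          exact hy (hFun_one_supp hu0 y (by rw [one_mul]; linarith [not_le.1 hy2]))
        have : r * u / 2 < |x - y| := by
          have := abs_sub_abs_le_abs_sub x y
          push_cast at hx ⊢
          nlinarith [abs_nonneg x]
        rw [supp _ this, zero_mul]

lemma hFun_integrable (hu0 : 0 < u) (hu1 : u ≤ 1) {r : ℕ} (hr : 1 ≤ r) :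
    Integrable (hFun u r) := by
  obtain ⟨meas, nonneg, le_one, supp⟩ := hFun_prop hu0 hu1 r hr
  have hind : Integrable (Set.indicator (Icc (-((r:ℝ)*u/2)) ((r:ℝ)*u/2)) (fun _ => (1:ℝ))) :=
    (integrable_indicator_iff measurableSet_Icc).2
      ((integrableOn_const measure_Icc_lt_top.ne))
  refine hind.mono' meas.aestronglyMeasurable ?_
  filter_upwards with x
  rw [Real.norm_eq_abs, abs_of_nonneg (nonneg x)]
  by_cases hx : x ∈ Icc (-((r:ℝ)*u/2)) ((r:ℝ)*u/2)
  · rw [Set.indicator_of_mem hx]; exact le_one x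
  · rw [Set.indicator_of_notMem hx]
    have : (r:ℝ) * u / 2 < |x| := by
      rw [Set.mem_Icc, not_and_or, not_le, not_le] at hx
      rcases hx with h | h
      · calc (r:ℝ)*u/2 < -x := by linarith
        _ ≤ |x| := neg_le_abs x
      · exact h.trans_le (le_abs_self x)
    rw [supp x this]

/-- Fourier transform multiplicativity. -/
lemma hFun_fourier (hu0 : 0 < u) (hu1 : u ≤ 1) (k : ℤ) :
    ∀ r : ℕ, 1 ≤ r →
    ∫ x : ℝ, (hFun u r x : ℂ) * ee k x = (∫ x : ℝ, (hFun u 1 x : ℂ) * ee k x) ^ r := by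
  intro r hr
  induction r, hr using Nat.le_induction with
  | base => rw [pow_one]
  | succ r hr ih =>
    have hfr : Integrable (fun x => (hFun u r x : ℂ) * ee k x) :=
      integrable_mul_ee (hFun_integrable hu0 hu1 hr) k
    have hf1 : Integrable (fun x => (hFun u 1 x : ℂ) * ee k x) :=
      integrable_mul_ee (hFun_one_integrable) k
    have key : ∀ x : ℝ, (hFun u (r+1) x : ℂ) * ee k x =
        ((fun t => (hFun u 1 t : ℂ) * ee k t) ⋆[ContinuousLinearMap.mul ℂ ℂ]
          (fun t => (hFun u r t : ℂ) * ee k t)) x := by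
      intro x
      rw [MeasureTheory.convolution_def]
      simp only [ContinuousLinearMap.mul_apply']
      have : ∀ t : ℝ, ((hFun u 1 t : ℂ) * ee k t) * ((hFun u r (x - t) : ℂ) * ee k (x - t)) =
          ((hFun u r (x - t) * hFun u 1 t : ℝ) : ℂ) * ee k x := by
        intro t
        have he : ee k t * ee k (x - t) = ee k x := by
          rw [← ee_add]; norm_num
        push_cast
        calc (hFun u 1 t : ℂ) * ee k t * ((hFun u r (x - t) : ℂ) * ee k (x - t))
            = ((hFun u r (x - t) : ℂ) * (hFun u 1 t : ℂ)) * (ee k t * ee k (x - t)) := by ring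
          _ = _ := by rw [he]
      simp_rw [this]
      rw [MeasureTheory.integral_mul_const]
      congr 1
      rw [hFun_succ hr x]
      exact (integral_ofReal (𝕜 := ℂ)).symm
    rw [integral_congr_ae (Filter.Eventually.of_forall key),
      MeasureTheory.integral_convolution (L := ContinuousLinearMap.mul ℂ ℂ) (μ := volume) (ν := volume) hf1 hfr, ih]
    simp only [ContinuousLinearMap.mul_apply']
    ring

lemma base_norm_le_u (hu0 : 0 < u) (k : ℤ) : ‖∫ x : ℝ, (hFun u 1 x : ℂ) * ee k x‖ ≤ u := by
  calc ‖∫ x : ℝ, (hFun u 1 x : ℂ) * ee k x‖ ≤ ∫ x : ℝ, ‖(hFun u 1 x : ℂ) * ee k x‖ :=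
        norm_integral_le_integral_norm _
    _ = ∫ x : ℝ, hFun u 1 x := by
        apply integral_congr_ae
        filter_upwards with x
        simp [norm_mul, ee_norm, ee_abs, abs_of_nonneg (hFun_one_nonneg x)]
    _ = u := hFun_one_integral hu0

lemma base_val (hu0 : 0 < u) {k : ℤ} (hk : k ≠ 0) :
    ‖∫ x : ℝ, (hFun u 1 x : ℂ) * ee k x‖ =
      |Real.sin (π * k * u)| / (π * |(k:ℝ)|) := by
  set c : ℂ := -(2 * (π:ℂ) * Complex.I * (k:ℂ)) with hc_def
  have hc : c ≠ 0 := by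
    simp only [hc_def, neg_ne_zero]
    exact mul_ne_zero (mul_ne_zero (mul_ne_zero two_ne_zero
      (Complex.ofReal_ne_zero.2 Real.pi_ne_zero)) Complex.I_ne_zero) (Int.cast_ne_zero.2 hk)
  have step1 : ∫ x : ℝ, (hFun u 1 x : ℂ) * ee k x = ∫ x in Ico (-(u/2)) (u/2), ee k x := by
    rw [← MeasureTheory.integral_indicator measurableSet_Ico]
    apply integral_congr_ae
    filter_upwards with x
    rw [hFun_one]
    by_cases h : x ∈ Ico (-(u/2)) (u/2) <;> simp [h]
  have step2 : ∫ x in Ico (-(u/2)) (u/2), ee k x = ∫ x in (-(u/2))..(u/2), Complex.exp (c * x) := by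
    rw [MeasureTheory.integral_Ico_eq_integral_Ioo, ← MeasureTheory.integral_Ioc_eq_integral_Ioo,
      ← intervalIntegral.integral_of_le (by linarith)]
    apply intervalIntegral.integral_congr
    intro x _
    rw [ee]
    congr 1
    simp only [hc_def]
    ring
  set θ : ℝ := π * k * u with hθ
  have h1 : c * ((u/2 : ℝ) : ℂ) = ((-θ : ℝ) : ℂ) * Complex.I := by
    simp only [hc_def, hθ]; push_cast; ring
  have h2 : c * ((-(u/2) : ℝ) : ℂ) = ((θ : ℝ) : ℂ) * Complex.I := by
    simp only [hc_def, hθ]; push_cast; ring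
  rw [step1, step2, integral_exp_mul_complex hc, h1, h2]
  have h3 : Complex.exp (((-θ : ℝ) : ℂ) * Complex.I) - Complex.exp (((θ : ℝ) : ℂ) * Complex.I)
      = -(2 * (Real.sin θ : ℂ) * Complex.I) := by
    rw [Complex.exp_mul_I, Complex.exp_mul_I]
    push_cast
    rw [Complex.cos_neg, Complex.sin_neg]
    ring
  rw [h3, norm_div, norm_neg, norm_mul, norm_mul]
  simp only [hc_def, norm_neg, norm_mul, Complex.norm_I, Complex.norm_two,
    Complex.norm_real, Real.norm_eq_abs, Complex.norm_intCast, mul_one]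
  rw [abs_of_nonneg Real.pi_pos.le]
  have hkpos : (0:ℝ) < |(k:ℝ)| := by
    rw [abs_pos]; exact_mod_cast hk
  field_simp

lemma base_norm_le_invk (hu0 : 0 < u) {k : ℤ} (hk : k ≠ 0) :
    ‖∫ x : ℝ, (hFun u 1 x : ℂ) * ee k x‖ ≤ 1 / |(k:ℝ)| := by
  rw [base_val hu0 hk]
  have hkpos : (0:ℝ) < |(k:ℝ)| := by rw [abs_pos]; exact_mod_cast hk
  rw [div_le_div_iff₀ (by positivity) hkpos]
  have h1 : |Real.sin (π * k * u)| ≤ 1 := abs_le.mpr ⟨Real.neg_one_le_sin _, Real.sin_le_one _⟩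
  nlinarith [Real.pi_gt_three, abs_nonneg (Real.sin (π * k * u)), hkpos]

lemma hFun_shift_vanish (hu0 : 0 < u) (hu1 : u ≤ 1) {r : ℕ} (hr : 1 ≤ r)
    {m : ℤ} (hm : m ∉ Finset.Icc (-(r:ℤ) - 1) ((r:ℤ) + 1)) {y : ℝ}
    (h1 : (m:ℝ) ≤ y) (h2 : y < (m:ℝ) + 1) : hFun u r y = 0 := by
  obtain ⟨-, -, -, supp⟩ := hFun_prop hu0 hu1 r hr
  apply supp
  rw [Finset.mem_Icc, not_and_or, not_le, not_le] at hm
  have hru : (r:ℝ) * u ≤ (r:ℝ) := by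
    nlinarith [Nat.cast_nonneg (α := ℝ) r]
  rcases hm with hm | hm
  · have hm' : (m:ℝ) ≤ -(r:ℝ) - 2 := by
      have : m + 1 ≤ -(r:ℤ) - 1 := hm
      exact_mod_cast by push_cast at this ⊢; linarith
    have : -y ≤ |y| := neg_le_abs y
    linarith
  · have hm' : (r:ℝ) + 2 ≤ (m:ℝ) := by
      have : (r:ℤ) + 2 ≤ m := hm
      exact_mod_cast this
    have : y ≤ |y| := le_abs_self y
    linarith

lemma periodize_integral (hu0 : 0 < u) (hu1 : u ≤ 1) {r : ℕ} (hr : 1 ≤ r) (k : ℤ) :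
    ∫ x in Ico (0:ℝ) 1, ((∑' m : ℤ, hFun u r ((m:ℝ) + x) : ℝ) : ℂ) * ee k x
      = ∫ x : ℝ, (hFun u r x : ℂ) * ee k x := by
  set s : Finset ℤ := Finset.Icc (-(r:ℤ) - 1) ((r:ℤ) + 1) with hs
  have hg : Integrable (fun y => (hFun u r y : ℂ) * ee k y) := by
    exact integrable_mul_ee (hFun_integrable hu0 hu1 hr) k
  have hsh : ∀ (m : ℤ) (x : ℝ), (hFun u r ((m:ℝ) + x) : ℂ) * ee k x
      = (hFun u r ((m:ℝ) + x) : ℂ) * ee k ((m:ℝ) + x) := by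
    intro m x
    rw [ee_add, ee_int, one_mul]
  have hgm : ∀ m : ℤ, Integrable (fun x : ℝ => (hFun u r ((m:ℝ) + x) : ℂ) * ee k x) := by
    intro m
    exact (hg.comp_add_left (m:ℝ)).congr
      (Filter.Eventually.of_forall fun x => (hsh m x).symm)
  have stepA : ∫ x in Ico (0:ℝ) 1, ((∑' m : ℤ, hFun u r ((m:ℝ) + x) : ℝ) : ℂ) * ee k x
      = ∑ m ∈ s, ∫ x in Ico (0:ℝ) 1, (hFun u r ((m:ℝ) + x) : ℂ) * ee k x := by
    rw [MeasureTheory.setIntegral_congr_fun measurableSet_Ico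
      (g := fun x => ∑ m ∈ s, (hFun u r ((m:ℝ) + x) : ℂ) * ee k x) ?_]
    · apply MeasureTheory.integral_finset_sum
      intro m _
      exact (hgm m).integrableOn
    · intro x hx
      rw [Set.mem_Ico] at hx
      simp only
      rw [tsum_eq_sum (s := s) (fun m hm => hFun_shift_vanish hu0 hu1 hr hm
        (by linarith [hx.1]) (by push_cast; linarith [hx.2]))]
      push_cast
      rw [Finset.sum_mul]
  have stepB : ∀ m : ℤ, ∫ x in Ico (0:ℝ) 1, (hFun u r ((m:ℝ) + x) : ℂ) * ee k x
      = ∫ y in Ico (m:ℝ) ((m:ℝ) + 1), (hFun u r y : ℂ) * ee k y := by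
    intro m
    rw [MeasureTheory.setIntegral_congr_fun measurableSet_Ico (fun x _ => hsh m x)]
    rw [MeasureTheory.integral_Ico_eq_integral_Ioo, ← MeasureTheory.integral_Ioc_eq_integral_Ioo,
      ← intervalIntegral.integral_of_le zero_le_one,
      intervalIntegral.integral_comp_add_left (fun y => (hFun u r y : ℂ) * ee k y) (m:ℝ),
      add_zero, intervalIntegral.integral_of_le (by linarith),
      MeasureTheory.integral_Ioc_eq_integral_Ioo, ← MeasureTheory.integral_Ico_eq_integral_Ioo]
  have stepC : ∑ m ∈ s, ∫ y in Ico (m:ℝ) ((m:ℝ) + 1), (hFun u r y : ℂ) * ee k y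
      = ∑' m : ℤ, ∫ y in Ico (m:ℝ) ((m:ℝ) + 1), (hFun u r y : ℂ) * ee k y := by
    symm
    apply tsum_eq_sum
    intro m hm
    have : EqOn (fun y => (hFun u r y : ℂ) * ee k y) (fun _ => (0:ℂ)) (Ico (m:ℝ) ((m:ℝ) + 1)) := by
      intro y hy
      rw [Set.mem_Ico] at hy
      simp [hFun_shift_vanish hu0 hu1 hr hm hy.1 hy.2]
    rw [MeasureTheory.setIntegral_congr_fun measurableSet_Ico this]
    simp
  have stepD : ∑' m : ℤ, ∫ y in Ico (m:ℝ) ((m:ℝ) + 1), (hFun u r y : ℂ) * ee k y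
      = ∫ y : ℝ, (hFun u r y : ℂ) * ee k y := by
    rw [← MeasureTheory.integral_iUnion (fun m : ℤ => measurableSet_Ico)
      (pairwise_disjoint_Ico_intCast ℝ) (by rw [iUnion_Ico_intCast]; exact hg.integrableOn)]
    rw [iUnion_Ico_intCast, Measure.restrict_univ]
  rw [stepA]
  simp_rw [stepB]
  rw [stepC, stepD]

/-- The Fourier coefficients of the periodization of `h^r_u` satisfy
`|ĥ̃^r_u(k)| ≤ min(u^r, 1/|k|^r)` (with right-hand side `u^r` for `k = 0`). -/
theorem periodized_hFun_fourierCoeff_bound (r : ℕ) (hr : 1 ≤ r) (u : ℝ)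
    (hu0 : 0 < u) (hu1 : u ≤ 1) (k : ℤ) :
    ‖∫ x in Set.Ico (0 : ℝ) 1,
        ((∑' m : ℤ, hFun u r ((m : ℝ) + x) : ℝ) : ℂ) *
          Complex.exp (-(2 * Real.pi * Complex.I * (k : ℂ) * (x : ℂ)))‖ ≤
      if k = 0 then u ^ r else min (u ^ r) (1 / |(k : ℝ)| ^ r) := by
  have hee : (∫ x in Set.Ico (0:ℝ) 1,
      ((∑' m : ℤ, hFun u r ((m : ℝ) + x) : ℝ) : ℂ) *
        Complex.exp (-(2 * Real.pi * Complex.I * (k : ℂ) * (x : ℂ))))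
      = ∫ x in Set.Ico (0:ℝ) 1, ((∑' m : ℤ, hFun u r ((m : ℝ) + x) : ℝ) : ℂ) * ee k x := rfl
  rw [hee, periodize_integral hu0 hu1 hr k, hFun_fourier hu0 hu1 k r hr, norm_pow]
  by_cases hk : k = 0
  · rw [if_pos hk]
    exact pow_le_pow_left₀ (norm_nonneg _) (base_norm_le_u hu0 k) r
  · rw [if_neg hk]
    apply le_min
    · exact pow_le_pow_left₀ (norm_nonneg _) (base_norm_le_u hu0 k) r
    · have h := base_norm_le_invk hu0 hk
      calc ‖∫ x : ℝ, ((hFun u 1 x : ℝ) : ℂ) * ee k x‖ ^ r ≤ (1 / |(k:ℝ)|) ^ r :=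
            pow_le_pow_left₀ (norm_nonneg _) h r
        _ = 1 / |(k:ℝ)| ^ r := by rw [div_pow, one_pow]

end
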